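/- arXiv:2603.15278 — 3 statements merged into one kernel-verified Lean document; each statement's English description precedes it below -/
import Mathlib

section
/- Let p_j ≠ p_k in ℝ² with p_k − p_j = d_jk·(cos α, sin α), d_jk = ‖p_k − p_j‖, let u = (p_k − p_j)/d_jk, and let e = p_j + λ·(p_k − p_j) with λ ∈ [0,1]. Suppose at time t the trajectories have derivatives ṗ_j = v_j·R_{φ_j}(u), ṗ_k = −v_k·R_{φ_k}^T(u), and ė = μ·(cos ψ, sin ψ). Then the function t ↦ A(e(t), p_j(t), p_k(t)) has derivative at t equal to ½·[ v_j·‖e − p_k‖·sin φ_j + v_k·‖e − p_j‖·sin φ_k − d_jk·μ·sin(α − ψ) ]. (Closed-loop area rate under the edge-phase strategy, equation (18) of the paper.) -/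
open Real

noncomputable section

/-- The vector `(a, b)` in the Euclidean plane. -/
def vec2 (a b : ℝ) : EuclideanSpace ℝ (Fin 2) := (WithLp.equiv 2 (Fin 2 → ℝ)).symm ![a, b]

/-- Signed area `A(a,b,c) = ½·[a₁(b₂−c₂) + b₁(c₂−a₂) + c₁(a₂−b₂)]`. -/
def sarea (a b c : EuclideanSpace ℝ (Fin 2)) : ℝ :=
  (1/2) * (a 0 * (b 1 - c 1) + b 0 * (c 1 - a 1) + c 0 * (a 1 - b 1))

/-- `v^⊥ = (−v₂, v₁)`. -/
def perp (v : EuclideanSpace ℝ (Fin 2)) : EuclideanSpace ℝ (Fin 2) := vec2 (-(v 1)) (v 0)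

/-- Planar dot product. -/
def dot2 (u v : EuclideanSpace ℝ (Fin 2)) : ℝ := u 0 * v 0 + u 1 * v 1

/-- Clockwise rotation by `φ`: `R_φ(a,b) = (a cos φ + b sin φ, −a sin φ + b cos φ)`. -/
def rotCW (φ : ℝ) (v : EuclideanSpace ℝ (Fin 2)) : EuclideanSpace ℝ (Fin 2) :=
  vec2 (v 0 * Real.cos φ + v 1 * Real.sin φ) (-(v 0) * Real.sin φ + v 1 * Real.cos φ)

/-- Counterclockwise rotation by `φ` (the transpose `R_φ^T`). -/
def rotCCW (φ : ℝ) (v : EuclideanSpace ℝ (Fin 2)) : EuclideanSpace ℝ (Fin 2) :=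
  vec2 (v 0 * Real.cos φ - v 1 * Real.sin φ) (v 0 * Real.sin φ + v 1 * Real.cos φ)

/-- Closed-loop area rate under the edge-phase strategy (equation (18)): under the stated
derivative hypotheses, `t ↦ A(e(t), p_j(t), p_k(t))` has derivative
`½·[ v_j‖e − p_k‖ sin φ_j + v_k‖e − p_j‖ sin φ_k − d_jk μ sin(α − ψ) ]` at `t`. -/
theorem stmt_5 (pj pk e : ℝ → EuclideanSpace ℝ (Fin 2)) (t : ℝ)
    (djk lam vj vk φj φk μ ψ α : ℝ) (u : EuclideanSpace ℝ (Fin 2))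
    (hne : pj t ≠ pk t)
    (hdjk : djk = ‖pk t - pj t‖)
    (hdir : pk t - pj t = djk • vec2 (Real.cos α) (Real.sin α))
    (hu : u = djk⁻¹ • (pk t - pj t))
    (hlam : lam ∈ Set.Icc (0:ℝ) 1)
    (he : e t = pj t + lam • (pk t - pj t))
    (hpj' : HasDerivAt pj (vj • rotCW φj u) t)
    (hpk' : HasDerivAt pk (-(vk • rotCCW φk u)) t)
    (he' : HasDerivAt e (μ • vec2 (Real.cos ψ) (Real.sin ψ)) t) :
    HasDerivAt (fun s => sarea (e s) (pj s) (pk s))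
      ((1/2) * (vj * ‖e t - pk t‖ * Real.sin φj + vk * ‖e t - pj t‖ * Real.sin φk
        - djk * μ * Real.sin (α - ψ))) t := by
  have hd0 : (0:ℝ) < djk := by
    rw [hdjk]; exact norm_pos_iff.mpr (sub_ne_zero.mpr (Ne.symm hne))
  have hu2 : u = vec2 (Real.cos α) (Real.sin α) := by
    rw [hu, hdir, smul_smul, inv_mul_cancel₀ hd0.ne', one_smul]
  have smul_app : ∀ (r : ℝ) (v : EuclideanSpace ℝ (Fin 2)) (i : Fin 2), (r • v) i = r * v i :=
    fun _ _ _ => rfl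
  have proj : ∀ (f : ℝ → EuclideanSpace ℝ (Fin 2)) (f' : EuclideanSpace ℝ (Fin 2)),
      HasDerivAt f f' t → ∀ i : Fin 2, HasDerivAt (fun s => f s i) (f' i) t := by
    intro f f' hf i
    have := (EuclideanSpace.proj i).hasFDerivAt.comp_hasDerivAt t hf; exact this
  -- component values of points
  have hK0 : pk t 0 = pj t 0 + djk * Real.cos α := by
    have h := congrArg (fun v : EuclideanSpace ℝ (Fin 2) => v 0) hdir
    simp only [smul_app, vec2] at h
    simp only [PiLp.sub_apply] at h
    simp [WithLp.equiv_symm_apply, PiLp.toLp_apply] at h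
    linarith
  have hK1 : pk t 1 = pj t 1 + djk * Real.sin α := by
    have h := congrArg (fun v : EuclideanSpace ℝ (Fin 2) => v 1) hdir
    simp only [smul_app, vec2] at h
    simp only [PiLp.sub_apply] at h
    simp [WithLp.equiv_symm_apply, PiLp.toLp_apply] at h
    linarith
  have hE0 : e t 0 = pj t 0 + lam * (djk * Real.cos α) := by
    have h := congrArg (fun v : EuclideanSpace ℝ (Fin 2) => v 0) he
    simp only [PiLp.add_apply, smul_app, PiLp.sub_apply] at h
    rw [h]; rw [hK0]; ring
  have hE1 : e t 1 = pj t 1 + lam * (djk * Real.sin α) := by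
    have h := congrArg (fun v : EuclideanSpace ℝ (Fin 2) => v 1) he
    simp only [PiLp.add_apply, smul_app, PiLp.sub_apply] at h
    rw [h]; rw [hK1]; ring
  -- norms
  have hnk : ‖e t - pk t‖ = (1 - lam) * djk := by
    have h : e t - pk t = (lam - 1) • (pk t - pj t) := by
      rw [he]; module
    rw [h, norm_smul, ← hdjk, Real.norm_eq_abs, abs_of_nonpos (by linarith [hlam.2])]
    ring
  have hnj : ‖e t - pj t‖ = lam * djk := by
    have h : e t - pj t = lam • (pk t - pj t) := by
      rw [he]; module
    rw [h, norm_smul, ← hdjk, Real.norm_eq_abs, abs_of_nonneg hlam.1]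
  -- coordinate derivatives
  have dE0 := proj _ _ he' 0
  have dE1 := proj _ _ he' 1
  have dJ0 := proj _ _ hpj' 0
  have dJ1 := proj _ _ hpj' 1
  have dK0 := proj _ _ hpk' 0
  have dK1 := proj _ _ hpk' 1
  have key := (((dE0.mul (dJ1.sub dK1)).add (dJ0.mul (dK1.sub dE1))).add
      (dK0.mul (dE1.sub dJ1))).const_mul ((1:ℝ)/2)
  have hval : (1/2) * (vj * ‖e t - pk t‖ * Real.sin φj + vk * ‖e t - pj t‖ * Real.sin φk
        - djk * μ * Real.sin (α - ψ))
      = (1:ℝ)/2 * ((μ • vec2 (Real.cos ψ) (Real.sin ψ)) 0 * (pj t 1 - pk t 1) +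
          e t 0 * ((vj • rotCW φj u) 1 - (-(vk • rotCCW φk u)) 1) +
          ((vj • rotCW φj u) 0 * (pk t 1 - e t 1) +
           pj t 0 * ((-(vk • rotCCW φk u)) 1 - (μ • vec2 (Real.cos ψ) (Real.sin ψ)) 1)) +
          ((-(vk • rotCCW φk u)) 0 * (e t 1 - pj t 1) +
           pk t 0 * ((μ • vec2 (Real.cos ψ) (Real.sin ψ)) 1 - (vj • rotCW φj u) 1))) := by
    simp only [hu2, vec2, rotCW, rotCCW, PiLp.neg_apply, smul_app]
    simp only [WithLp.equiv_symm_apply, PiLp.toLp_apply, Matrix.cons_val_zero, Matrix.cons_val_one,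
      Matrix.head_cons]
    rw [hnk, hnj, hE0, hE1, hK0, hK1, Real.sin_sub]
    linear_combination (-(((1-lam)*djk*vj*Real.sin φj + lam*djk*vk*Real.sin φk)/2)) *
      (Real.sin_sq_add_cos_sq α)
  rw [hval]
  exact key


end
end

section
/- Let p, e : ℝ → ℝ² have derivatives at time t, with p(t) ≠ e(t), p'(t) = (e(t) − p(t))/‖e(t) − p(t)‖ (pure pursuit at unit speed), and ‖e'(t)‖ ≤ μ_m for some μ_m ∈ [0,1). Then the function t ↦ ‖p(t) − e(t)‖ is differentiable at t and its derivative satisfies d/dt ‖p(t) − e(t)‖ ≤ −(1 − μ_m). -/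
/-- Interior-phase Lyapunov decay: if `p` pursues `e` at unit speed directly toward it
(`p'(t) = (e(t) − p(t))/‖e(t) − p(t)‖`), `p(t) ≠ e(t)` and `‖e'(t)‖ ≤ μ_m < 1`, then
`t ↦ ‖p(t) − e(t)‖` is differentiable at `t` with derivative at most `−(1 − μ_m)`. -/
theorem stmt_7 (p e : ℝ → EuclideanSpace ℝ (Fin 2)) (t μm : ℝ)
    (hμm : μm ∈ Set.Ico (0:ℝ) 1) (e' : EuclideanSpace ℝ (Fin 2))
    (hne : p t ≠ e t)
    (hp : HasDerivAt p (‖e t - p t‖⁻¹ • (e t - p t)) t)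
    (he : HasDerivAt e e' t) (hbound : ‖e'‖ ≤ μm) :
    ∃ D : ℝ, HasDerivAt (fun s => ‖p s - e s‖) D t ∧ D ≤ -(1 - μm) := by
  set d : EuclideanSpace ℝ (Fin 2) := e t - p t with hd
  have hdne : d ≠ 0 := sub_ne_zero.2 (Ne.symm hne)
  have hdpos : (0:ℝ) < ‖d‖ := norm_pos_iff.2 hdne
  set f : ℝ → EuclideanSpace ℝ (Fin 2) := fun s => p s - e s with hf
  have hf' : HasDerivAt f (‖d‖⁻¹ • d - e') t := hp.sub he
  have hsq : HasDerivAt (fun s => ‖f s‖ ^ 2)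
      (2 * inner ℝ (f t) (‖d‖⁻¹ • d - e')) t := hf'.norm_sq
  have hft : f t = -d := by simp [hf, hd, neg_sub]
  have hfsq : ‖f t‖ ^ 2 ≠ 0 := by
    rw [hft]; simpa using pow_ne_zero 2 (norm_ne_zero_iff.2 hdne)
  have hsqrt := hsq.sqrt hfsq
  have heq : (fun s => Real.sqrt (‖f s‖ ^ 2)) = fun s => ‖p s - e s‖ := by
    funext s; rw [Real.sqrt_sq (norm_nonneg _)]
  have hinner : (inner ℝ (f t) (‖d‖⁻¹ • d - e') : ℝ) = -‖d‖ + inner ℝ d e' := by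
    rw [hft, inner_neg_left, inner_sub_right, real_inner_smul_right,
      real_inner_self_eq_norm_sq]
    field_simp
    ring
  refine ⟨_, heq ▸ hsqrt, ?_⟩
  have hsval : Real.sqrt (‖f t‖ ^ 2) = ‖d‖ := by
    rw [hft, Real.sqrt_sq (norm_nonneg _), norm_neg]
  rw [hsval, hinner]
  have h1 : (inner ℝ d e' : ℝ) ≤ ‖d‖ * μm :=
    (real_inner_le_norm d e').trans (by
      exact mul_le_mul_of_nonneg_left hbound (norm_nonneg _))
  rw [div_le_iff₀ (by positivity)]
  nlinarith [hdpos]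
end

section
/- Let p_j, p_k, e : ℝ → ℝ² have derivatives at time t, with p_j(t) ≠ p_k(t) and e(t) = p_j(t) + λ·(p_k(t) − p_j(t)) for some λ ∈ (0,1). Suppose p_j'(t) = R_{φ_j}( (e(t) − p_j(t))/‖e(t) − p_j(t)‖ ) and p_k'(t) = R_{φ_k}^T( (e(t) − p_k(t))/‖e(t) − p_k(t)‖ ) for φ_j, φ_k ∈ ℝ, and e'(t) is arbitrary. Then d/dt ‖p_j(t) − e(t)‖ + d/dt ‖p_k(t) − e(t)‖ = −cos φ_j − cos φ_k; in particular the sum is independent of the evader's velocity. -/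
open Real

noncomputable section

lemma inner2 (x y : EuclideanSpace ℝ (Fin 2)) : inner ℝ x y = x 0 * y 0 + x 1 * y 1 := by
  simp [PiLp.inner_apply, Fin.sum_univ_two, RCLike.inner_apply, mul_comm]

lemma hasDerivAt_norm' {f : ℝ → EuclideanSpace ℝ (Fin 2)} {f' : EuclideanSpace ℝ (Fin 2)} {t : ℝ}
    (hf : HasDerivAt f f' t) (h0 : f t ≠ 0) :
    HasDerivAt (fun s => ‖f s‖) ((inner ℝ (f t) f' : ℝ) / ‖f t‖) t := by
  have hsq : HasDerivAt (fun s => ‖f s‖ ^ 2) (2 * (inner ℝ (f t) f' : ℝ)) t := hf.norm_sq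
  have hn : (‖f t‖ : ℝ) ^ 2 ≠ 0 := pow_ne_zero _ (norm_ne_zero_iff.2 h0)
  have h2 := (Real.hasDerivAt_sqrt hn).comp t hsq
  have hfun : (fun s => Real.sqrt (‖f s‖ ^ 2)) = fun s => ‖f s‖ := by
    funext s; exact Real.sqrt_sq (norm_nonneg _)
  rw [Function.comp_def, hfun] at h2
  refine h2.congr_deriv ?_
  rw [Real.sqrt_sq (norm_nonneg _)]
  field_simp

/-- Edge-phase distance rate: when `e` lies strictly between the active pursuers `p_j, p_k`
and each active pursuer moves at unit speed along the unit vector toward the evader rotated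
by its control angle, then `d/dt ‖p_j − e‖ + d/dt ‖p_k − e‖ = −cos φ_j − cos φ_k`,
independently of the evader's velocity `e'`. -/
theorem stmt_8 (pj pk e : ℝ → EuclideanSpace ℝ (Fin 2)) (t φj φk lam : ℝ)
    (hne : pj t ≠ pk t) (hlam : lam ∈ Set.Ioo (0:ℝ) 1)
    (he : e t = pj t + lam • (pk t - pj t))
    (e' : EuclideanSpace ℝ (Fin 2))
    (hpj : HasDerivAt pj (rotCW φj (‖e t - pj t‖⁻¹ • (e t - pj t))) t)
    (hpk : HasDerivAt pk (rotCCW φk (‖e t - pk t‖⁻¹ • (e t - pk t))) t)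
    (heD : HasDerivAt e e' t) :
    ∃ Dj Dk : ℝ, HasDerivAt (fun s => ‖pj s - e s‖) Dj t ∧
      HasDerivAt (fun s => ‖pk s - e s‖) Dk t ∧
      Dj + Dk = -Real.cos φj - Real.cos φk := by
  obtain ⟨hl0, hl1⟩ := hlam
  have hu : pk t - pj t ≠ 0 := sub_ne_zero.2 (Ne.symm hne)
  set u : EuclideanSpace ℝ (Fin 2) := pk t - pj t with hu_def
  set c : ℝ := ‖u‖ with hc_def
  have hc : 0 < c := norm_pos_iff.2 hu
  have hej : e t - pj t = lam • u := by rw [he]; module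
  have hek : e t - pk t = (lam - 1) • u := by rw [he]; module
  have hpje : pj t - e t = (-lam) • u := by rw [he]; module
  have hpke : pk t - e t = (1 - lam) • u := by rw [he]; module
  have n1 : ‖lam • u‖ = lam * c := by
    rw [norm_smul, Real.norm_of_nonneg hl0.le]
  have n2 : ‖(lam - 1) • u‖ = (1 - lam) * c := by
    rw [norm_smul, Real.norm_eq_abs, abs_of_neg (by linarith), neg_sub]
  have n3 : ‖(-lam) • u‖ = lam * c := by
    rw [norm_smul, Real.norm_eq_abs, abs_neg, abs_of_pos hl0]
  have n4 : ‖(1 - lam) • u‖ = (1 - lam) * c := by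
    rw [norm_smul, Real.norm_of_nonneg (by linarith)]
  have h0j : pj t - e t ≠ 0 := by
    rw [hpje]; exact smul_ne_zero (neg_ne_zero.2 hl0.ne') hu
  have h0k : pk t - e t ≠ 0 := by
    rw [hpke]; exact smul_ne_zero (by linarith : (0:ℝ) < 1 - lam).ne' hu
  have hfj : HasDerivAt (fun s => pj s - e s)
      (rotCW φj (‖e t - pj t‖⁻¹ • (e t - pj t)) - e') t := hpj.sub heD
  have hfk : HasDerivAt (fun s => pk s - e s)
      (rotCCW φk (‖e t - pk t‖⁻¹ • (e t - pk t)) - e') t := hpk.sub heD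
  refine ⟨_, _, hasDerivAt_norm' hfj h0j, hasDerivAt_norm' hfk h0k, ?_⟩
  have hc2 : u 0 ^ 2 + u 1 ^ 2 = c ^ 2 := by
    have h := real_inner_self_eq_norm_sq u
    rw [inner2] at h
    rw [← h]; ring
  have h1l : (1:ℝ) - lam ≠ 0 := by linarith
  have hvj : ‖e t - pj t‖⁻¹ • (e t - pj t) = c⁻¹ • u := by
    rw [hej, norm_smul, Real.norm_of_nonneg hl0.le, smul_smul]
    congr 1
    field_simp
    exact hc_def
  have hvk : ‖e t - pk t‖⁻¹ • (e t - pk t) = -(c⁻¹ • u) := by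
    rw [hek, norm_smul, Real.norm_eq_abs, abs_of_neg (by linarith : lam - 1 < 0),
      smul_smul, ← neg_smul]
    congr 1
    field_simp
    rw [← hc_def]
    have h' : (-1 + lam)⁻¹ * (-1 + lam) = 1 := inv_mul_cancel₀ (by linarith)
    linear_combination (-c) * h'
  have hj : (inner ℝ u (rotCW φj (c⁻¹ • u) - e') : ℝ)
      = c * Real.cos φj - (u 0 * e' 0 + u 1 * e' 1) := by
    rw [inner2]
    simp only [rotCW, vec2, PiLp.sub_apply, PiLp.smul_apply, smul_eq_mul,
      WithLp.equiv_symm_apply, PiLp.toLp_apply, Matrix.cons_val_zero, Matrix.cons_val_one, Matrix.head_cons]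
    field_simp
    linear_combination Real.cos φj * hc2
  have hk : (inner ℝ u (rotCCW φk (-(c⁻¹ • u)) - e') : ℝ)
      = -(c * Real.cos φk) - (u 0 * e' 0 + u 1 * e' 1) := by
    rw [inner2]
    simp only [rotCCW, vec2, PiLp.sub_apply, PiLp.smul_apply, smul_eq_mul,
      WithLp.equiv_symm_apply, PiLp.toLp_apply, Matrix.cons_val_zero, Matrix.cons_val_one, Matrix.head_cons,
      PiLp.neg_apply]
    field_simp
    linear_combination -Real.cos φk * hc2
  rw [hpje, hpke, hvj, hvk, n3, n4, real_inner_smul_left, real_inner_smul_left, hj, hk]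
  field_simp
  ring

end
end
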